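/- arXiv:0807.3868 — 2 statements merged into one kernel-verified Lean document; each statement's English description precedes it below -/
import Mathlib

section
/- For the Gamma(m,1) distribution with density f^{(m)}(t) = t^{m-1} e^{-t}/(m-1)! and distribution function F^{(m)}, the quantity F^{(m)}(t)(1 - F^{(m)}(t))·|d/dt f^{(m)}(t)| / (f^{(m)}(t))^2 is bounded by some finite constant γ = γ(m) uniformly over t ∈ (0,∞). -/
/-- The Gamma(m,1) distribution function. -/
noncomputable def gammaCDF (m : ℕ) (t : ℝ) : ℝ :=
  (∫ x in (0:ℝ)..t, x ^ (m - 1) * Real.exp (-x)) / (Nat.factorial (m - 1) : ℝ)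

/-- The Gamma(m,1) density `f^{(m)}(t) = t^{m-1} e^{-t} / (m-1)!`. -/
noncomputable def gammaDens (m : ℕ) (t : ℝ) : ℝ :=
  t ^ (m - 1) * Real.exp (-t) / (Nat.factorial (m - 1) : ℝ)

open Real Finset

noncomputable def expSum (n : ℕ) (t : ℝ) : ℝ := ∑ k ∈ Finset.range (n+1), t^k / k.factorial

lemma expSum_zero (n : ℕ) : expSum n 0 = 1 := by
  rw [expSum, Finset.sum_eq_single 0]
  · simp
  · intro b _ hb; simp [zero_pow hb]
  · simp

lemma hasDerivAt_expSum (n : ℕ) (t : ℝ) :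
    HasDerivAt (expSum n) (∑ k ∈ Finset.range n, t^k / k.factorial) t := by
  have h : HasDerivAt (expSum n)
      (∑ k ∈ Finset.range (n+1), (k * t^(k-1)) / k.factorial) t := by
    apply HasDerivAt.fun_sum
    intro k _
    exact (hasDerivAt_pow k t).div_const _
  convert h using 1
  rw [Finset.sum_range_succ']
  simp only [Nat.cast_zero, zero_mul, Nat.factorial_zero, Nat.cast_one, zero_div, add_zero]
  apply Finset.sum_congr rfl
  intro k _
  rw [Nat.factorial_succ]
  push_cast
  rw [mul_div_mul_left]
  positivity

lemma hasDerivAt_exp_neg (t : ℝ) : HasDerivAt (fun x : ℝ => Real.exp (-x)) (-Real.exp (-t)) t := by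
  simpa using (hasDerivAt_id t).neg.exp

lemma hasDerivAt_G (n : ℕ) (t : ℝ) :
    HasDerivAt (fun x => 1 - Real.exp (-x) * expSum n x)
      (t^n * Real.exp (-t) / n.factorial) t := by
  have h2 := (hasDerivAt_const t (1:ℝ)).sub ((hasDerivAt_exp_neg t).mul (hasDerivAt_expSum n t))
  refine h2.congr_deriv ?_
  rw [expSum, Finset.sum_range_succ]
  ring

lemma gammaCDF_eq (n : ℕ) (t : ℝ) :
    gammaCDF (n+1) t = 1 - Real.exp (-t) * expSum n t := by
  have key : ∀ x ∈ Set.uIcc (0:ℝ) t,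
      HasDerivAt (fun x => (n.factorial:ℝ) * (1 - Real.exp (-x) * expSum n x))
        (x^n * Real.exp (-x)) x := by
    intro x _
    have h := (hasDerivAt_G n x).const_mul (n.factorial : ℝ)
    refine h.congr_deriv ?_
    field_simp
  have hint : IntervalIntegrable (fun x : ℝ => x^n * Real.exp (-x)) MeasureTheory.volume 0 t :=
    Continuous.intervalIntegrable (by continuity) _ _
  have := intervalIntegral.integral_eq_sub_of_hasDerivAt key hint
  rw [gammaCDF, Nat.add_sub_cancel, this, expSum_zero]
  field_simp
  simp

lemma hasDerivAt_gammaDens (n : ℕ) (t : ℝ) :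
    HasDerivAt (gammaDens (n+1)) (((n:ℝ) * t^(n-1) - t^n) * Real.exp (-t) / n.factorial) t := by
  have h := ((hasDerivAt_pow n t).mul (hasDerivAt_exp_neg t)).div_const (n.factorial : ℝ)
  have heq : gammaDens (n+1) = fun x : ℝ => x^n * Real.exp (-x) / n.factorial := by
    funext x; rw [gammaDens, Nat.add_sub_cancel]
  rw [heq]
  refine h.congr_deriv ?_
  ring

lemma pow_pred_mul (n : ℕ) (t : ℝ) : (n:ℝ) * t^(n-1) * t = n * t^n := by
  cases n with
  | zero => simp
  | succ k => rw [Nat.add_sub_cancel]; push_cast; ring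


lemma bound_aux (n : ℕ) (t e S Fv f d : ℝ) (ht : 0 < t) (he : 0 < e) (hS : 0 ≤ S)
    (hF0 : 0 ≤ Fv) (hf : f = t^n*e/n.factorial) (h1F : 1 - Fv = e * S)
    (hd : |d| ≤ (((n:ℝ)+t)/t) * (t^n*e/n.factorial))
    (key : Fv*S*((n:ℝ)+t)*n.factorial ≤ (((n:ℝ)+1)^2*n.factorial)*(t*t^n)) :
    Fv * (1 - Fv) * |d| / f^2 ≤ ((n:ℝ)+1)^2*n.factorial := by
  have hfacpos : (0:ℝ) < n.factorial := by positivity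
  have hfpos : 0 < f := by rw [hf]; positivity
  rw [div_le_iff₀ (by positivity : (0:ℝ) < f^2)]
  calc Fv * (1 - Fv) * |d|
      ≤ Fv * (1 - Fv) * ((((n:ℝ)+t)/t) * (t^n*e/n.factorial)) := by
        apply mul_le_mul_of_nonneg_left hd
        rw [h1F]
        exact mul_nonneg hF0 (mul_nonneg he.le hS)
    _ = (Fv * S * ((n:ℝ)+t) * n.factorial) * (e^2 * t^n) / (t * (n.factorial:ℝ)^2) := by
        rw [h1F]; field_simp
    _ ≤ ((((n:ℝ)+1)^2*n.factorial) * (t*t^n)) * (e^2*t^n) / (t*(n.factorial:ℝ)^2) := by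
        gcongr
    _ = (((n:ℝ)+1)^2*n.factorial) * f^2 := by
        rw [hf]; field_simp

/-- The quantity `F^{(m)}(t)(1-F^{(m)}(t)) |f^{(m)}'(t)| / f^{(m)}(t)²` is uniformly
bounded over `t ∈ (0,∞)` by a finite constant `γ = γ(m)`. -/
theorem gamma_score_bounded (m : ℕ) (hm : 1 ≤ m) :
    ∃ γ : ℝ, ∀ t : ℝ, 0 < t →
      gammaCDF m t * (1 - gammaCDF m t) * |deriv (gammaDens m) t| / (gammaDens m t) ^ 2
        ≤ γ := by
  obtain ⟨n, rfl⟩ : ∃ n, m = n + 1 := ⟨m - 1, (Nat.succ_pred_eq_of_pos hm).symm⟩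
  refine ⟨((n:ℝ)+1)^2 * n.factorial, ?_⟩
  intro t ht
  have hn0 : (0:ℝ) ≤ (n:ℝ) := n.cast_nonneg
  have he : (0:ℝ) < Real.exp (-t) := Real.exp_pos _
  have hone_le_fac : ∀ k : ℕ, (1:ℝ) ≤ k.factorial := by
    intro k; exact_mod_cast k.factorial_pos
  have hfacpos : (0:ℝ) < n.factorial := by positivity
  have hSnn : 0 ≤ expSum n t := by
    rw [expSum]
    apply Finset.sum_nonneg
    intro k _
    positivity
  have hfval : gammaDens (n+1) t = t^n * Real.exp (-t) / n.factorial := by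
    rw [gammaDens, Nat.add_sub_cancel]
  have hFval : gammaCDF (n+1) t = 1 - Real.exp (-t) * expSum n t := gammaCDF_eq n t
  have hF0 : 0 ≤ gammaCDF (n+1) t := by
    rw [gammaCDF]
    apply div_nonneg _ (by positivity)
    apply intervalIntegral.integral_nonneg (le_of_lt ht)
    intro x hx
    have hx0 := hx.1
    positivity
  have hd := (hasDerivAt_gammaDens n t).deriv
  have habs : |deriv (gammaDens (n+1)) t|
      ≤ (((n:ℝ)+t)/t) * (t^n*Real.exp (-t)/n.factorial) := by
    rw [hd, abs_div, abs_mul, abs_of_pos he, abs_of_pos hfacpos]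
    have h1 : |(n:ℝ)*t^(n-1) - t^n| ≤ (n:ℝ)*t^(n-1) + t^n := by
      have := abs_add_le ((n:ℝ)*t^(n-1)) (-(t^n))
      rw [abs_neg, abs_of_nonneg (by positivity : (0:ℝ) ≤ (n:ℝ)*t^(n-1)),
        abs_of_nonneg (by positivity : (0:ℝ) ≤ t^n)] at this
      simpa [sub_eq_add_neg] using this
    have h2 : (((n:ℝ)+t)/t) * (t^n*Real.exp (-t)/n.factorial)
        = ((n:ℝ)*t^(n-1) + t^n)*Real.exp (-t)/n.factorial := by
      have hp := pow_pred_mul n t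
      field_simp
      nlinarith [hp, mul_pos he hfacpos]
    rw [h2]
    gcongr
  have key : gammaCDF (n+1) t * expSum n t * ((n:ℝ)+t) * n.factorial
      ≤ (((n:ℝ)+1)^2 * n.factorial) * (t * t^n) := by
    rcases le_total t 1 with h1 | h1
    · -- small t
      have hFle : gammaCDF (n+1) t ≤ t^(n+1)/(((n:ℝ)+1) * n.factorial) := by
        rw [gammaCDF, Nat.add_sub_cancel]
        have hint : IntervalIntegrable (fun x : ℝ => x^n * Real.exp (-x))
            MeasureTheory.volume 0 t := Continuous.intervalIntegrable (by continuity) _ _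
        have hint2 : IntervalIntegrable (fun x : ℝ => x^n) MeasureTheory.volume 0 t :=
          Continuous.intervalIntegrable (by continuity) _ _
        have hmono := intervalIntegral.integral_mono_on (le_of_lt ht) hint hint2 ?side
        case side =>
          intro x hx
          have hx0 := hx.1
          have hex : Real.exp (-x) ≤ 1 := by
            calc Real.exp (-x) ≤ Real.exp 0 := Real.exp_le_exp.mpr (by linarith)
              _ = 1 := Real.exp_zero
          have hxn : (0:ℝ) ≤ x^n := by positivity
          nlinarith
        rw [integral_pow] at hmono
        have hI : (∫ x in (0:ℝ)..t, x ^ n * Real.exp (-x)) ≤ t^(n+1)/((n:ℝ)+1) := by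
          simpa using hmono
        rw [← div_div]
        gcongr
      have hSle : expSum n t ≤ (n:ℝ)+1 := by
        rw [expSum]
        calc ∑ k ∈ Finset.range (n+1), t^k/(k.factorial:ℝ)
            ≤ ∑ _k ∈ Finset.range (n+1), (1:ℝ) := by
              apply Finset.sum_le_sum
              intro k _
              rw [div_le_one (by positivity)]
              calc t^k ≤ 1 := pow_le_one₀ ht.le h1
                _ ≤ (k.factorial : ℝ) := hone_le_fac k
          _ = (n:ℝ)+1 := by simp
      calc gammaCDF (n+1) t * expSum n t * ((n:ℝ)+t) * n.factorial
          ≤ (t^(n+1)/(((n:ℝ)+1) * n.factorial)) * ((n:ℝ)+1) * ((n:ℝ)+1) * n.factorial := by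
            gcongr <;> first
              | exact mul_nonneg hF0 hSnn | exact hF0 | exact hFle | exact hSle
              | linarith | positivity
        _ = ((n:ℝ)+1) * t^(n+1) := by field_simp
        _ ≤ (((n:ℝ)+1)^2*n.factorial) * (t*t^n) := by
            rw [← pow_succ']
            have h3 : ((n:ℝ)+1) ≤ ((n:ℝ)+1)^2*n.factorial := by
              nlinarith [hone_le_fac n]
            have h5 : (0:ℝ) ≤ t^(n+1) := by positivity
            nlinarith
    · -- large t
      have hFle : gammaCDF (n+1) t ≤ 1 := by
        rw [hFval]
        nlinarith [mul_nonneg he.le hSnn]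
      have hSle : expSum n t ≤ ((n:ℝ)+1) * t^n := by
        rw [expSum]
        calc ∑ k ∈ Finset.range (n+1), t^k/(k.factorial:ℝ)
            ≤ ∑ _k ∈ Finset.range (n+1), t^n := by
              apply Finset.sum_le_sum
              intro k hk
              have hkn : k ≤ n := Nat.lt_succ_iff.mp (Finset.mem_range.mp hk)
              calc t^k/(k.factorial:ℝ) ≤ t^k := div_le_self (by positivity) (hone_le_fac k)
                _ ≤ t^n := pow_le_pow_right₀ h1 hkn
          _ = ((n:ℝ)+1) * t^n := by
            rw [Finset.sum_const, Finset.card_range]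
            push_cast
            ring
      have hnt : (n:ℝ)+t ≤ ((n:ℝ)+1)*t := by nlinarith
      calc gammaCDF (n+1) t * expSum n t * ((n:ℝ)+t) * n.factorial
          ≤ 1*(((n:ℝ)+1)*t^n)*(((n:ℝ)+1)*t)*n.factorial := by
            gcongr <;> first
              | exact mul_nonneg hF0 hSnn | exact hF0 | exact hFle | exact hSle
              | linarith | positivity
        _ = (((n:ℝ)+1)^2*n.factorial)*(t*t^n) := by ring
  exact bound_aux n t (Real.exp (-t)) (expSum n t) (gammaCDF (n+1) t)
    (gammaDens (n+1) t) (deriv (gammaDens (n+1)) t) ht he hSnn hF0 hfval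
    (by rw [hFval]; ring) habs key
end

section
/- For the Gamma(m,1) distribution, lim_{t→∞} F^{(m)}(t)(1 - F^{(m)}(t))·|d/dt f^{(m)}(t)| / (f^{(m)}(t))^2 = 1. -/
open Filter

lemma hasDerivAt_G_s6 (N : ℕ) (t : ℝ) :
    HasDerivAt (fun s => 1 - Real.exp (-s) * ∑ k ∈ Finset.range (N+1), s^k / (k.factorial : ℝ))
      (t^N * Real.exp (-t) / N.factorial) t := by
  induction N with
  | zero =>
      have hexp : HasDerivAt (fun s : ℝ => Real.exp (-s)) (-Real.exp (-t)) t := by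
        simpa [Function.comp_def] using (Real.hasDerivAt_exp (-t)).comp t (hasDerivAt_neg t)
      simpa using hexp.const_sub 1
  | succ N ih =>
      have hexp : HasDerivAt (fun s : ℝ => Real.exp (-s)) (-Real.exp (-t)) t := by
        simpa [Function.comp_def] using (Real.hasDerivAt_exp (-t)).comp t (hasDerivAt_neg t)
      have hpow : HasDerivAt (fun s : ℝ => s^(N+1) / ((N+1).factorial : ℝ))
          ((N+1) * t^N / ((N+1).factorial : ℝ)) t := by
        simpa using (hasDerivAt_pow (N+1) t).div_const ((N+1).factorial : ℝ)
      have h3 := ih.sub (hexp.mul hpow)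
      have heq : (fun s : ℝ =>
          (1 - Real.exp (-s) * ∑ k ∈ Finset.range (N+1), s^k/(k.factorial:ℝ)) -
            Real.exp (-s) * (s^(N+1)/((N+1).factorial:ℝ)))
          = fun s => 1 - Real.exp (-s) * ∑ k ∈ Finset.range (N+2), s^k/(k.factorial:ℝ) := by
        funext s; rw [Finset.sum_range_succ (fun k => s^k/(k.factorial:ℝ)) (N+1)]; ring
      simp only [Pi.sub_def, Pi.mul_def] at h3
      rw [heq] at h3
      refine h3.congr_deriv ?_
      have hf : ((N+1).factorial : ℝ) = (N+1) * N.factorial := by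
        push_cast [Nat.factorial_succ]; ring
      have h1 : (N.factorial : ℝ) ≠ 0 := Nat.cast_ne_zero.mpr N.factorial_ne_zero
      rw [hf]
      field_simp [hf]
      ring

lemma gammaCDF_eq_s6 (N : ℕ) (t : ℝ) :
    gammaCDF (N+1) t
      = 1 - Real.exp (-t) * ∑ k ∈ Finset.range (N+1), t^k/(k.factorial:ℝ) := by
  have key : ∀ x ∈ Set.uIcc (0:ℝ) t,
      HasDerivAt (fun s => (N.factorial:ℝ) *
        (1 - Real.exp (-s) * ∑ k ∈ Finset.range (N+1), s^k/(k.factorial:ℝ)))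
        (x^N * Real.exp (-x)) x := by
    intro x _
    have h := (hasDerivAt_G_s6 N x).const_mul (N.factorial:ℝ)
    refine h.congr_deriv ?_
    have h1 : (N.factorial : ℝ) ≠ 0 := Nat.cast_ne_zero.mpr N.factorial_ne_zero
    field_simp
  have hint : IntervalIntegrable (fun x : ℝ => x^N * Real.exp (-x)) MeasureTheory.volume 0 t :=
    (Continuous.intervalIntegrable (by fun_prop) _ _)
  have hftc := intervalIntegral.integral_eq_sub_of_hasDerivAt key hint
  have h0 : ∑ k ∈ Finset.range (N+1), (0:ℝ)^k/(k.factorial:ℝ) = 1 := by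
    rw [Finset.sum_eq_single_of_mem 0 (Finset.mem_range.mpr (Nat.succ_pos N))]
    · simp
    · intro k _ hk
      simp [zero_pow hk]
  unfold gammaCDF
  rw [Nat.add_sub_cancel, hftc]
  simp only [h0, neg_zero, Real.exp_zero, one_mul, sub_self, mul_zero, sub_zero]
  have h1 : (N.factorial : ℝ) ≠ 0 := Nat.cast_ne_zero.mpr N.factorial_ne_zero
  field_simp

lemma gammaDens_hasDerivAt (N : ℕ) (t : ℝ) :
    HasDerivAt (gammaDens (N+1))
      (((N:ℝ) * t^(N-1) - t^N) * Real.exp (-t) / (N.factorial:ℝ)) t := by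
  have hexp : HasDerivAt (fun s : ℝ => Real.exp (-s)) (-Real.exp (-t)) t := by
    simpa [Function.comp_def] using (Real.hasDerivAt_exp (-t)).comp t (hasDerivAt_neg t)
  have h := ((hasDerivAt_pow N t).mul hexp).div_const (N.factorial:ℝ)
  have hfun : gammaDens (N+1) = fun s => s^N * Real.exp (-s) / (N.factorial:ℝ) := by
    funext s; simp [gammaDens]
  rw [hfun]
  refine h.congr_deriv ?_
  ring

lemma tendsto_exp_mul_S (N : ℕ) :
    Tendsto (fun t : ℝ => Real.exp (-t) * ∑ k ∈ Finset.range (N+1), t^k/(k.factorial:ℝ))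
      atTop (nhds 0) := by
  have heq : ∀ t : ℝ, Real.exp (-t) * ∑ k ∈ Finset.range (N+1), t^k/(k.factorial:ℝ)
      = ∑ k ∈ Finset.range (N+1), (t^k * Real.exp (-t))/(k.factorial:ℝ) := by
    intro t
    rw [Finset.mul_sum]
    exact Finset.sum_congr rfl fun k _ => by ring
  simp only [heq]
  have h := tendsto_finset_sum (Finset.range (N+1))
    (fun k (_ : k ∈ Finset.range (N+1)) =>
      ((Real.tendsto_pow_mul_exp_neg_atTop_nhds_zero k).div_const ((k.factorial:ℝ))))
  simpa using h

lemma tendsto_S_fac (N : ℕ) :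
    Tendsto (fun t : ℝ =>
      (∑ k ∈ Finset.range (N+1), t^k/(k.factorial:ℝ)) * (N.factorial:ℝ) / t^N)
      atTop (nhds 1) := by
  have hterm : ∀ k ∈ Finset.range (N+1),
      Tendsto (fun t : ℝ => (t^k/(k.factorial:ℝ)) * (N.factorial:ℝ) / t^N) atTop
        (nhds (if k = N then 1 else 0)) := by
    intro k hk
    rcases eq_or_lt_of_le (Nat.lt_succ_iff.mp (Finset.mem_range.mp hk)) with hkN | hkN
    · subst hkN
      simp only [if_pos rfl, if_true]
      apply Tendsto.congr' _ tendsto_const_nhds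
      filter_upwards [eventually_gt_atTop (0:ℝ)] with t ht
      have hkf : ((k.factorial:ℝ)) ≠ 0 := Nat.cast_ne_zero.mpr k.factorial_ne_zero
      field_simp
    · simp only [if_neg hkN.ne]
      have hp : Tendsto (fun t : ℝ => t^(N-k)) atTop atTop :=
        tendsto_pow_atTop (by omega)
      have hinv : Tendsto (fun t : ℝ => (t^(N-k))⁻¹) atTop (nhds 0) :=
        hp.inv_tendsto_atTop
      have hlim0 : Tendsto (fun t : ℝ => ((N.factorial:ℝ)/(k.factorial:ℝ)) * (t^(N-k))⁻¹)
          atTop (nhds 0) := by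
        simpa using hinv.const_mul ((N.factorial:ℝ)/(k.factorial:ℝ))
      apply Tendsto.congr' _ hlim0
      filter_upwards [eventually_gt_atTop (0:ℝ)] with t ht
      have hsplit : t^N = t^k * t^(N-k) := by
        rw [← pow_add]; congr 1; omega
      have hkf : ((k.factorial:ℝ)) ≠ 0 := Nat.cast_ne_zero.mpr k.factorial_ne_zero
      rw [hsplit]
      field_simp
  have hsum := tendsto_finset_sum (Finset.range (N+1)) hterm
  rw [Finset.sum_ite_eq' (Finset.range (N+1)) N (fun _ => (1:ℝ)),
    if_pos (Finset.self_mem_range_succ N)] at hsum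
  apply hsum.congr
  intro t
  rw [Finset.sum_mul, Finset.sum_div]

/-- `F^{(m)}(t)(1-F^{(m)}(t)) |f^{(m)}'(t)| / f^{(m)}(t)² → 1` as `t → ∞`. -/
theorem gamma_score_limit_atTop (m : ℕ) (hm : 1 ≤ m) :
    Tendsto
      (fun t : ℝ =>
        gammaCDF m t * (1 - gammaCDF m t) * |deriv (gammaDens m) t| / (gammaDens m t) ^ 2)
      atTop (nhds 1) := by
  obtain ⟨N, rfl⟩ : ∃ N, m = N + 1 := ⟨m - 1, (Nat.succ_pred_eq_of_pos hm).symm⟩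
  have hfac : (N.factorial : ℝ) ≠ 0 := Nat.cast_ne_zero.mpr N.factorial_ne_zero
  have h1 : Tendsto (fun t : ℝ =>
      1 - Real.exp (-t) * ∑ k ∈ Finset.range (N+1), t^k/(k.factorial:ℝ)) atTop (nhds 1) := by
    simpa using tendsto_const_nhds.sub (tendsto_exp_mul_S N)
  have h2 := tendsto_S_fac N
  have h3 : Tendsto (fun t : ℝ => 1 - (N:ℝ)/t) atTop (nhds 1) := by
    have h : Tendsto (fun t : ℝ => (N:ℝ)/t) atTop (nhds 0) :=
      tendsto_const_nhds.div_atTop tendsto_id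
    simpa using tendsto_const_nhds.sub h
  have hlim := (h1.mul h2).mul h3
  rw [show (1:ℝ) * 1 * 1 = 1 by ring] at hlim
  apply Tendsto.congr' _ hlim
  filter_upwards [eventually_ge_atTop ((N:ℝ)+1)] with t ht
  have ht0 : (0:ℝ) < t := by linarith [Nat.cast_nonneg (α := ℝ) N]
  have htN : (N:ℝ) ≤ t := by linarith
  have hne : t ≠ 0 := ne_of_gt ht0
  have hexpne : Real.exp (-t) ≠ 0 := (Real.exp_pos _).ne'
  have habs : (N:ℝ) * t^(N-1) ≤ t^N := by
    rcases N with _ | M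
    · simp
    · rw [pow_succ, Nat.add_sub_cancel]
      calc ((M+1:ℕ):ℝ) * t^M ≤ t * t^M := by
            apply mul_le_mul_of_nonneg_right _ (pow_nonneg ht0.le M)
            exact_mod_cast htN
        _ = t^M * t := mul_comm _ _
  have hD : ((N:ℝ) * t^(N-1) - t^N) * Real.exp (-t) / (N.factorial:ℝ) ≤ 0 := by
    apply div_nonpos_of_nonpos_of_nonneg
    · exact mul_nonpos_of_nonpos_of_nonneg (by linarith) (Real.exp_pos _).le
    · positivity
  rw [gammaCDF_eq_s6, (gammaDens_hasDerivAt N t).deriv, abs_of_nonpos hD]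
  simp only [gammaDens, Nat.add_sub_cancel]
  have htpow : t^N ≠ 0 := pow_ne_zero _ hne
  rcases N with _ | M
  · simp only [pow_zero, Nat.factorial_zero, Nat.cast_one, Nat.cast_zero]
    field_simp
    ring
  · have hMs : (M+1) - 1 = M := rfl
    rw [hMs]
    have hps : t^(M+1) = t^M * t := pow_succ t M
    rw [hps] at *
    field_simp
    ring
end
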